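/- In the stage game get-close-to-the-target with target k, let S ⊆ {1,…,n} be a nonempty finite set with k ∈ S. Then the mixed strategy for player 1 that randomizes uniformly over S guarantees, against every opponent action a₂, an expected utility of at least −(1 − 1/|S|); i.e., it is a (1 − 1/|S|)-approximate maximin strategy for the game of value 0. -/
import Mathlib


/-- Possible outcomes of a round of a zero-sum stage game. -/
inductive Outcome
  | P1Wins
  | P2Wins
  | Draw
deriving DecidableEq

/-- The outcome of a round of *get-close-to-the-target* with actions `a₁` (player 1),
`a₂` (player 2) and hidden target `k`: if `|aᵢ - k| < |a₋ᵢ - k|` then player `i` wins;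
if `a₁ = a₂ = a ≠ k` then player 1 wins if `a < k` and player 2 wins if `a > k`;
otherwise the round is a draw. -/
def outcome (a₁ a₂ k : ℤ) : Outcome :=
  if |a₁ - k| < |a₂ - k| then .P1Wins
  else if |a₂ - k| < |a₁ - k| then .P2Wins
  else if a₁ = a₂ ∧ a₁ ≠ k then (if a₁ < k then .P1Wins else .P2Wins)
  else .Draw

/-- Player 1's utility in a round: `1` for a win, `-1` for a loss, `0` for a draw. -/
def u1 : Outcome → ℤ
  | .P1Wins => 1
  | .P2Wins => -1
  | .Draw => 0

lemma u1_ge (o : Outcome) : (-1 : ℝ) ≤ (u1 o : ℝ) := by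
  cases o <;> simp [u1]

lemma u1_k_nonneg (a₂ k : ℤ) : (0 : ℝ) ≤ (u1 (outcome k a₂ k) : ℝ) := by
  unfold outcome
  split_ifs with h1 h2 h3 <;> simp_all [u1]

/-- In the stage game get-close-to-the-target with target `k`, let `S ⊆ {1,…,n}` be a
nonempty finite set with `k ∈ S`. Then the mixed strategy for player 1 that randomizes
uniformly over `S` guarantees, against every opponent action `a₂`, an expected utility
of at least `−(1 − 1/|S|)`; i.e., it is a `(1 − 1/|S|)`-approximate maximin strategy for
the game of value `0`. -/
theorem stmt7 (n k : ℤ) (hn : 1 ≤ n) (hk : k ∈ Finset.Icc 1 n)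
    (S : Finset ℤ) (hS : S ⊆ Finset.Icc 1 n) (hkS : k ∈ S) :
    ∀ a₂ ∈ Finset.Icc 1 n,
      -(1 - 1 / (S.card : ℝ)) ≤ (∑ a₁ ∈ S, (u1 (outcome a₁ a₂ k) : ℝ)) / (S.card : ℝ) := by
  intro a₂ _
  have hcard : 0 < S.card := Finset.card_pos.mpr ⟨k, hkS⟩
  have hc : (0 : ℝ) < (S.card : ℝ) := by exact_mod_cast hcard
  have hsum : -((S.card : ℝ) - 1) ≤ ∑ a₁ ∈ S, (u1 (outcome a₁ a₂ k) : ℝ) := by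
    rw [← Finset.add_sum_erase _ _ hkS]
    have h1 : (0 : ℝ) ≤ (u1 (outcome k a₂ k) : ℝ) := u1_k_nonneg a₂ k
    have h2 : -(((S.erase k).card : ℝ)) ≤ ∑ a₁ ∈ S.erase k, (u1 (outcome a₁ a₂ k) : ℝ) := by
      calc -(((S.erase k).card : ℝ)) = ∑ _a₁ ∈ S.erase k, (-1 : ℝ) := by
            simp [mul_comm]
        _ ≤ _ := Finset.sum_le_sum fun i _ => u1_ge _
    have hce : ((S.erase k).card : ℝ) = (S.card : ℝ) - 1 := by
      rw [Finset.card_erase_of_mem hkS]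
      have : 1 ≤ S.card := hcard
      push_cast [Nat.cast_sub this]
      ring
    linarith
  rw [le_div_iff₀ hc]
  calc -(1 - 1 / (S.card : ℝ)) * (S.card : ℝ) = -((S.card : ℝ) - 1) := by
        field_simp
    _ ≤ _ := hsum
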